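/- Let S be a cofibrantly generated model category, (C, D) a pair of small categories, X ∈ S^C and c an object of C. The following are equivalent: (i) X satisfies D-codescent at c; (ii) there exists a trivial D-fibration η : X′ → X with X′ D-cofibrant such that η(c) is a weak equivalence; (iii) for every trivial D-fibration η : X′ → X with X′ D-cofibrant, η(c) is a weak equivalence; (iv) there exists a (D ∪ {c})-weak equivalence η : X′ → X with X′ D-cofibrant; (v) for every D-weak equivalence η : X′ → X with X′ D-cofibrant, η(c) is a weak equivalence. -/

import Mathlib

/-! Preliminaries: basic notions of homotopical algebra (lifting properties,
model structures, transfinite compositions, relative cell complexes, smallness,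
cofibrant generation) and the relative model structure `U_S(C,D)` on functor
categories, following Balmer–Matthey, "Codescent theory I". -/

universe w v u u₂ u₃

open CategoryTheory Limits

namespace Codescent

set_option linter.dupNamespace false

section Lifting

variable {M : Type u} [Category.{v} M]

/-- The class of morphisms having the left lifting property with respect to all
morphisms in `K`. -/
def llp (K : MorphismProperty M) : MorphismProperty M :=
  fun _ _ f => ∀ ⦃X Y : M⦄ (g : X ⟶ Y), K g → HasLiftingProperty f g

/-- The class of morphisms having the right lifting property with respect to all
morphisms in `K`. -/
def rlp (K : MorphismProperty M) : MorphismProperty M :=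
  fun _ _ g => ∀ ⦃A B : M⦄ (f : A ⟶ B), K f → HasLiftingProperty f g

/-- Intersection of two classes of morphisms. -/
def inter (P Q : MorphismProperty M) : MorphismProperty M :=
  fun _ _ f => P f ∧ Q f

/-- `f` is a retract of `g` (as objects of the arrow category). -/
def RetractHom {X Y X' Y' : M} (f : X ⟶ Y) (g : X' ⟶ Y') : Prop :=
  ∃ (i : Arrow.mk f ⟶ Arrow.mk g) (r : Arrow.mk g ⟶ Arrow.mk f), i ≫ r = 𝟙 (Arrow.mk f)

/-- The object `c` is a retract of the object `d`. -/
def IsRetractObj (c d : M) : Prop :=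
  ∃ (i : c ⟶ d) (r : d ⟶ c), i ≫ r = 𝟙 c

/-- A functorial factorization of every morphism as a morphism in `L` followed by
a morphism in `R`. -/
structure FunctorialFact (L R : MorphismProperty M) where
  Z : Arrow M ⥤ M
  ι : (Arrow.leftFunc : Arrow M ⥤ M) ⟶ Z
  π : Z ⟶ (Arrow.rightFunc : Arrow M ⥤ M)
  fac : ∀ f : Arrow M, ι.app f ≫ π.app f = f.hom
  mem_left : ∀ f : Arrow M, L (ι.app f)
  mem_right : ∀ f : Arrow M, R (π.app f)

end Lifting

/-- A (Quillen) model structure on a category `M`: classes of weak equivalences,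
cofibrations and fibrations satisfying MC2–MC5 (MC1, completeness and
cocompleteness, is imposed separately as `HasLimits`/`HasColimits`). -/
structure ModelStructure (M : Type u) [Category.{v} M] where
  weq : MorphismProperty M
  cof : MorphismProperty M
  fib : MorphismProperty M
  /-- MC2, two-out-of-three -/
  weq_comp : ∀ {X Y Z : M} (f : X ⟶ Y) (g : Y ⟶ Z), weq f → weq g → weq (f ≫ g)
  weq_cancel_left : ∀ {X Y Z : M} (f : X ⟶ Y) (g : Y ⟶ Z), weq f → weq (f ≫ g) → weq g
  weq_cancel_right : ∀ {X Y Z : M} (f : X ⟶ Y) (g : Y ⟶ Z), weq g → weq (f ≫ g) → weq f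
  /-- MC3, closure under retracts -/
  weq_retract : ∀ {X Y X' Y' : M} (f : X ⟶ Y) (g : X' ⟶ Y'), RetractHom f g → weq g → weq f
  cof_retract : ∀ {X Y X' Y' : M} (f : X ⟶ Y) (g : X' ⟶ Y'), RetractHom f g → cof g → cof f
  fib_retract : ∀ {X Y X' Y' : M} (f : X ⟶ Y) (g : X' ⟶ Y'), RetractHom f g → fib g → fib f
  /-- MC4, lifting -/
  cof_lift : ∀ {A B X Y : M} (f : A ⟶ B) (g : X ⟶ Y),
    cof f → weq g → fib g → HasLiftingProperty f g
  fib_lift : ∀ {A B X Y : M} (f : A ⟶ B) (g : X ⟶ Y),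
    weq f → cof f → fib g → HasLiftingProperty f g
  /-- MC5, functorial factorizations -/
  fact₁ : FunctorialFact (M := M) cof (inter weq fib)
  fact₂ : FunctorialFact (M := M) (inter weq cof) fib

section Transfinite

/-- A well-ordered type (with bottom element and successors), the index for
transfinite compositions (a "λ-sequence" index). -/
structure WOType : Type (w + 1) where
  carrier : Type w
  [lin : LinearOrder carrier]
  [succ : SuccOrder carrier]
  [bot : OrderBot carrier]
  [wf : WellFoundedLT carrier]

attribute [instance] WOType.lin WOType.succ WOType.bot WOType.wf

variable {M : Type u} [Category.{v} M] {N : Type u₂} [Category.{v} N]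

/-- The class of pushouts of morphisms of `K`. -/
def pushoutsOf (K : MorphismProperty M) : MorphismProperty M :=
  fun X Y f => ∃ (A B : M) (g : A ⟶ B) (t : A ⟶ X) (b : B ⟶ Y), K g ∧ IsPushout g t b f

/-- The inclusion functor of `{i // i < j}` into a preorder `J`. -/
def iioIncl {J : Type w} [Preorder J] (j : J) : {i : J // i < j} ⥤ J where
  obj i := i.1
  map {i i'} h := homOfLE (Subtype.coe_le_coe.mpr (leOfHom h))

/-- The cocone on the restriction of `F : J ⥤ M` to `{i // i < j}` with apex `F.obj j`. -/
def iioCocone {J : Type w} [Preorder J] (F : J ⥤ M) (j : J) : Cocone (iioIncl j ⋙ F) where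
  pt := F.obj j
  ι :=
    { app := fun i => F.map (homOfLE i.2.le)
      naturality := fun i i' h => by
        dsimp
        rw [Category.comp_id, ← F.map_comp]
        rfl }

/-- `F : J ⥤ M` is a (continuous) transfinite sequence all of whose successor
maps lie in the class `P`. -/
structure IsChainOf (P : MorphismProperty M) {J : Type w} [LinearOrder J] [SuccOrder J]
    (F : J ⥤ M) : Prop where
  succ_mem : ∀ j : J, ¬ IsMax j → P (F.map (homOfLE (Order.le_succ j)))
  limit_isColimit : ∀ j : J, Order.IsSuccLimit j → Nonempty (IsColimit (iioCocone F j))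

/-- The class of relative `K`-cells: transfinite compositions of pushouts of
morphisms of `K`. -/
def cell (K : MorphismProperty M) : MorphismProperty M :=
  fun X Y f => ∃ (J : WOType.{v}) (F : J.carrier ⥤ M)
    (_ : IsChainOf (pushoutsOf K) F) (c : Cocone F) (_ : IsColimit c)
    (e : X ≅ F.obj ⊥) (e' : c.pt ≅ Y), f = e.hom ≫ c.ι.app ⊥ ≫ e'.hom

/-- A linear order is `κ`-filtered when it has no top element and every subset of
cardinality at most `κ` is bounded above. -/
def KFiltered (κ : Cardinal.{w}) (J : Type w) [LinearOrder J] : Prop :=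
  (∀ j : J, ∃ j' : J, j < j') ∧
    ∀ s : Set J, Cardinal.mk s ≤ κ → ∃ j : J, ∀ i ∈ s, i ≤ j

/-- The object `d` is small relative to the class `K`: for some cardinal `κ`,
morphisms from `d` into the colimit of any `κ`-filtered well-ordered continuous
sequence with successor maps in `K` factor, essentially uniquely, through some
stage of the sequence. -/
def IsSmallRel (d : M) (K : MorphismProperty M) : Prop :=
  ∃ κ : Cardinal.{v}, ∀ (J : WOType.{v}), KFiltered κ J.carrier →
    ∀ (F : J.carrier ⥤ M), IsChainOf K F →
    ∀ (c : Cocone F), IsColimit c →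
      (∀ g : d ⟶ c.pt, ∃ (j : J.carrier) (h : d ⟶ F.obj j), h ≫ c.ι.app j = g) ∧
      (∀ (j j' : J.carrier) (h : d ⟶ F.obj j) (h' : d ⟶ F.obj j'),
        h ≫ c.ι.app j = h' ≫ c.ι.app j' →
          ∃ (k : J.carrier) (l : j ≤ k) (l' : j' ≤ k),
            h ≫ F.map (homOfLE l) = h' ≫ F.map (homOfLE l'))

/-- The model structure `P` is cofibrantly generated, with set of generating
cofibrations `I` and set of generating trivial cofibrations `J`. -/
structure IsCofGen (P : ModelStructure M) (I J : MorphismProperty M) : Prop where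
  small_I : ∀ ⦃X Y : M⦄ (f : X ⟶ Y), I f → IsSmallRel X (cell I)
  small_J : ∀ ⦃X Y : M⦄ (f : X ⟶ Y), J f → IsSmallRel X (cell J)
  fib_eq : P.fib = rlp J
  trivFib_eq : inter P.weq P.fib = rlp I

/-- A functor preserves pushouts. -/
def PreservesPushouts (G : M ⥤ N) : Prop :=
  ∀ ⦃Z X Y P : M⦄ (f : Z ⟶ X) (g : Z ⟶ Y) (inl : X ⟶ P) (inr : Y ⟶ P),
    IsPushout f g inl inr → IsPushout (G.map f) (G.map g) (G.map inl) (G.map inr)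

/-- A functor preserves transfinite compositions: it preserves colimits of
diagrams indexed by well-ordered types. -/
def PreservesTransfiniteCompositions (G : M ⥤ N) : Prop :=
  ∀ (J : Type v) [LinearOrder J] [WellFoundedLT J] (F : J ⥤ M) (c : Cocone F),
    IsColimit c → Nonempty (IsColimit (G.mapCocone c))

/-- The image `{G(f) | f ∈ K}` of a class of morphisms under a functor. -/
def strictImage (G : M ⥤ N) (K : MorphismProperty M) : MorphismProperty N :=
  fun _ _ g => ∃ (A B : M) (f : A ⟶ B), K f ∧ Arrow.mk (G.map f) = Arrow.mk g

end Transfinite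

section CofRep

variable {M : Type u} [Category.{v} M]

/-- The cofibrant replacement of `X` given by the functorial factorization of
`∅ ⟶ X`. -/
noncomputable def cofRep (P : ModelStructure M) [HasInitial M] (X : M) : M :=
  P.fact₁.Z.obj (Arrow.mk (initial.to X))

/-- The canonical trivial fibration `QX ⟶ X` from the cofibrant replacement. -/
noncomputable def cofRepHom (P : ModelStructure M) [HasInitial M] (X : M) :
    cofRep P X ⟶ X :=
  P.fact₁.π.app (Arrow.mk (initial.to X))

/-- The functor `X ↦ (∅ ⟶ X)` to the arrow category. -/
noncomputable def toArrowInit (M : Type u) [Category.{v} M] [HasInitial M] : M ⥤ Arrow M where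
  obj X := Arrow.mk (initial.to X)
  map {X Y} f := Arrow.homMk (u := 𝟙 _) (v := f) (by apply initial.hom_ext)

/-- The cofibrant replacement functor of the model structure `P`. -/
noncomputable def qFunctor (P : ModelStructure M) [HasInitial M] : M ⥤ M :=
  toArrowInit M ⋙ P.fact₁.Z

end CofRep

section FunctorCat

variable {S : Type u} [Category.{v} S]

/-- The class of morphisms in `S^C` that belong objectwise on `D` to the class `P`;
for `P` the weak equivalences (resp. fibrations) of a model structure these are
the `D`-weak equivalences (resp. the `D`-fibrations). -/
def objProp {C : Type v} [SmallCategory C] (P : MorphismProperty S) (D : Set C) :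
    MorphismProperty (C ⥤ S) :=
  fun _ _ η => ∀ d ∈ D, P (η.app d)

/-- Trivial `D`-fibrations in `S^C`. -/
def dTrivFib {C : Type v} [SmallCategory C] (P : ModelStructure S) (D : Set C) :
    MorphismProperty (C ⥤ S) :=
  inter (objProp P.weq D) (objProp P.fib D)

/-- `D`-cofibrations in `S^C`: the morphisms having the left lifting property with
respect to all trivial `D`-fibrations. -/
def dCof {C : Type v} [SmallCategory C] (P : ModelStructure S) (D : Set C) :
    MorphismProperty (C ⥤ S) :=
  llp (dTrivFib P D)

variable [HasColimits S]

/-- `D`-cofibrant objects of `S^C`. -/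
def dCofibrant {C : Type v} [SmallCategory C] (P : ModelStructure S) (D : Set C)
    (X : C ⥤ S) : Prop :=
  dCof P D (initial.to X)

/-- The model structure `U_S(C,D)` on `S^C`: a model structure whose weak
equivalences are the `D`-weak equivalences, whose fibrations are the
`D`-fibrations and whose cofibrations are the `D`-cofibrations. -/
structure RelStructure (P : ModelStructure S) (C : Type v) [SmallCategory C] (D : Set C) where
  N : ModelStructure (C ⥤ S)
  weq_eq : N.weq = objProp P.weq D
  fib_eq : N.fib = objProp P.fib D
  cof_eq : N.cof = dCof P D

/-- `X` satisfies `D`-codescent at `c`: the cofibrant replacement morphism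
`Q_{C,D} X ⟶ X` in `U_S(C,D)` is a weak equivalence at `c`. -/
def CodescentAt {C : Type v} [SmallCategory C] (P : ModelStructure S) {D : Set C}
    (U : RelStructure P C D) (X : C ⥤ S) (c : C) : Prop :=
  P.weq ((cofRepHom U.N X).app c)

/-- `X` satisfies `D`-codescent: the cofibrant replacement morphism
`Q_{C,D} X ⟶ X` is a `C`-weak equivalence. -/
def Codescent {C : Type v} [SmallCategory C] (P : ModelStructure S) {D : Set C}
    (U : RelStructure P C D) (X : C ⥤ S) : Prop :=
  ∀ c : C, CodescentAt P U X c

/-- The coproduct property for weak equivalences. -/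
def CoproductProperty (P : ModelStructure S) : Prop :=
  ∀ (ι : Type v) (X Y : ι → S) (f : ∀ i, X i ⟶ Y i),
    (∀ i, P.weq (f i)) ↔ P.weq (Limits.Sigma.map f)

end FunctorCat

section Pairs

variable {A : Type v} [SmallCategory A] {C : Type v} [SmallCategory C]

/-- Two subsets of objects are retract equivalent. -/
def RetractEquiv (D D' : Set C) : Prop :=
  (∀ d ∈ D, ∃ d' ∈ D', IsRetractObj d d') ∧ (∀ d' ∈ D', ∃ d ∈ D, IsRetractObj d' d)

/-- `Φ : (A,B) ⟶ (C,D)` is left glossy. -/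
def LeftGlossy (Φ : A ⥤ C) (B : Set A) : Prop :=
  ∀ b ∈ B, ∃ (ι : Type v) (tgt : ι → A) (β : ∀ i, Φ.obj b ⟶ Φ.obj (tgt i)),
    (∀ i, tgt i ∈ B) ∧
      ∀ (a : A) (α : Φ.obj b ⟶ Φ.obj a),
        ∃! p : (i : ι) × (tgt i ⟶ a), β p.1 ≫ Φ.map p.2 = α

/-- `Φ : (A,B) ⟶ (C,D)` is right glossy. -/
def RightGlossy (Φ : A ⥤ C) (B : Set A) : Prop :=
  ∀ b ∈ B, ∃ (ι : Type v) (src : ι → A) (β : ∀ j, Φ.obj (src j) ⟶ Φ.obj b),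
    (∀ j, src j ∈ B) ∧
      ∀ (a : A) (α : Φ.obj a ⟶ Φ.obj b),
        ∃! p : (j : ι) × (a ⟶ src j), Φ.map p.2 ≫ β p.1 = α

/-- A subset of objects is left absorbant: the source of any morphism whose
target lies in the subset also lies in the subset. -/
def LeftAbsorbant (D : Set C) : Prop :=
  ∀ ⦃c c' : C⦄, (c ⟶ c') → c' ∈ D → c ∈ D

end Pairs

end Codescent
open Codescent


section AuxProofs

open CategoryTheory Limits Codescent

variable {S : Type u} [Category.{v} S]

lemma aux_weq_id (P : ModelStructure S) (X : S) : P.weq (𝟙 X) := by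
  have h := (P.fact₁.mem_right (Arrow.mk (𝟙 X))).1
  exact P.weq_cancel_left _ (𝟙 X) h (by erw [Category.comp_id]; exact h)

lemma aux_weq_of_llp (P : ModelStructure S) {A B : S} (f : A ⟶ B)
    (h : ∀ ⦃X Y : S⦄ (g : X ⟶ Y), P.fib g → HasLiftingProperty f g) : P.weq f := by
  have fac : P.fact₂.ι.app (Arrow.mk f) ≫ P.fact₂.π.app (Arrow.mk f) = f :=
    P.fact₂.fac (Arrow.mk f)
  have hmemL := P.fact₂.mem_left (Arrow.mk f)
  have hmemR := P.fact₂.mem_right (Arrow.mk f)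
  haveI : HasLiftingProperty f (P.fact₂.π.app (Arrow.mk f)) := h _ hmemR
  have sq : CommSq (P.fact₂.ι.app (Arrow.mk f)) f (P.fact₂.π.app (Arrow.mk f)) (𝟙 B) :=
    ⟨fac.trans (Category.comp_id f).symm⟩
  haveI : sq.HasLift := this.sq_hasLift sq
  have ret : RetractHom f (P.fact₂.ι.app (Arrow.mk f)) := by
    refine ⟨Arrow.homMk' (u := 𝟙 A) (v := sq.lift) ?_,
            Arrow.homMk' (u := 𝟙 A) (v := P.fact₂.π.app (Arrow.mk f)) ?_, ?_⟩
    · exact (Category.id_comp _).trans sq.fac_left.symm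
    · exact (Category.id_comp f).trans fac.symm
    · apply Arrow.hom_ext
      · exact Category.id_comp _
      · exact sq.fac_right
  exact P.weq_retract _ _ ret hmemL.1

lemma aux_lift_sigma [HasColimits S] {ι : Type v} {a b s t : S} (f : a ⟶ b) (g : s ⟶ t)
    (hfg : HasLiftingProperty f g) :
    HasLiftingProperty (Sigma.desc fun (x : ι) => f ≫ Sigma.ι (fun _ : ι => b) x) g := by
  constructor
  intro u v sq
  have sqi : ∀ x : ι, CommSq (Sigma.ι (fun _ : ι => a) x ≫ u) f g
      (Sigma.ι (fun _ : ι => b) x ≫ v) := fun x => ⟨by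
    rw [Category.assoc, sq.w]
    simp⟩
  refine ⟨⟨⟨Sigma.desc fun x => (sqi x).lift, ?_, ?_⟩⟩⟩
  · apply Sigma.hom_ext
    intro x
    simp [(sqi x).fac_left]
  · apply Sigma.hom_ext
    intro x
    simp [(sqi x).fac_right]

lemma aux_app_llp [HasLimits S] [HasColimits S] (P : ModelStructure S)
    {I J : MorphismProperty S} (hcg : IsCofGen P I J)
    {C : Type v} [SmallCategory C] {D : Set C} {A B : C ⥤ S} (η : A ⟶ B)
    (hη : ∀ ⦃W Z : C ⥤ S⦄ (φ : W ⟶ Z), objProp P.fib D φ → HasLiftingProperty η φ)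
    (c : C) : P.weq (η.app c) := by
  apply aux_weq_of_llp
  intro s t g hg
  have hg' : rlp J g := by rw [← hcg.fib_eq]; exact hg
  have adjc := evaluationAdjunctionLeft S c
  rw [show η.app c = ((evaluation C S).obj c).map η from rfl, adjc.hasLiftingProperty_iff]
  apply hη
  intro d hd
  rw [hcg.fib_eq]
  intro a b f hf
  have adjd := evaluationAdjunctionRight S d
  rw [show ((evaluationRightAdjoint S c).map g).app d
        = ((evaluation C S).obj d).map ((evaluationRightAdjoint S c).map g) from rfl,
      ← adjd.hasLiftingProperty_iff, ← adjc.hasLiftingProperty_iff]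
  show HasLiftingProperty (((evaluationLeftAdjoint S d).map f).app c) g
  rw [show ((evaluationLeftAdjoint S d).map f).app c
        = Sigma.desc fun (x : d ⟶ c) => f ≫ Sigma.ι (fun _ : d ⟶ c => b) x from rfl]
  exact aux_lift_sigma f g (hg' f hf)

lemma aux_inl_llp [HasColimits S] {A B W Z : S} (φ : W ⟶ Z)
    (h : HasLiftingProperty (initial.to B) φ) :
    HasLiftingProperty (coprod.inl : A ⟶ A ⨿ B) φ := by
  constructor
  intro u v sq
  have sq2 : CommSq (initial.to W) (initial.to B) φ (coprod.inr ≫ v) :=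
    ⟨initial.hom_ext _ _⟩
  refine ⟨⟨⟨coprod.desc u sq2.lift, coprod.inl_desc _ _, ?_⟩⟩⟩
  apply coprod.hom_ext
  · exact (coprod.inl_desc_assoc _ _ _).trans sq.w
  · exact (coprod.inr_desc_assoc _ _ _).trans sq2.fac_right

lemma aux_inr_llp [HasColimits S] {A B W Z : S} (φ : W ⟶ Z)
    (h : HasLiftingProperty (initial.to A) φ) :
    HasLiftingProperty (coprod.inr : B ⟶ A ⨿ B) φ := by
  constructor
  intro u v sq
  have sq2 : CommSq (initial.to W) (initial.to A) φ (coprod.inl ≫ v) :=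
    ⟨initial.hom_ext _ _⟩
  refine ⟨⟨⟨coprod.desc sq2.lift u, coprod.inr_desc _ _, ?_⟩⟩⟩
  apply coprod.hom_ext
  · exact (coprod.inl_desc_assoc _ _ _).trans sq2.fac_right
  · exact (coprod.inr_desc_assoc _ _ _).trans sq.w

lemma aux_key [HasLimits S] [HasColimits S] (P : ModelStructure S)
    {I J : MorphismProperty S} (hcg : IsCofGen P I J)
    {C : Type v} [SmallCategory C] {D : Set C} (U : RelStructure P C D)
    {A B : C ⥤ S} (θ : A ⟶ B) (hA : dCofibrant P D A) (hB : dCofibrant P D B)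
    (hθ : objProp P.weq D θ) (c : C) : P.weq (θ.app c) := by
  set φ : A ⨿ B ⟶ B := coprod.desc θ (𝟙 B) with hφ
  set i : A ⨿ B ⟶ U.N.fact₁.Z.obj (Arrow.mk φ) := U.N.fact₁.ι.app (Arrow.mk φ) with hidef
  set p : U.N.fact₁.Z.obj (Arrow.mk φ) ⟶ B := U.N.fact₁.π.app (Arrow.mk φ) with hpdef
  have fac : i ≫ p = φ := U.N.fact₁.fac (Arrow.mk φ)
  have hicof : U.N.cof i := U.N.fact₁.mem_left (Arrow.mk φ)
  have hpmem := U.N.fact₁.mem_right (Arrow.mk φ)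
  have hinl : ∀ ⦃W Z : C ⥤ S⦄ (ψ : W ⟶ Z), dTrivFib P D ψ →
      HasLiftingProperty (coprod.inl : A ⟶ A ⨿ B) ψ := fun W Z ψ hψ =>
    aux_inl_llp ψ (hB ψ hψ)
  have hinr : ∀ ⦃W Z : C ⥤ S⦄ (ψ : W ⟶ Z), dTrivFib P D ψ →
      HasLiftingProperty (coprod.inr : B ⟶ A ⨿ B) ψ := fun W Z ψ hψ =>
    aux_inr_llp ψ (hA ψ hψ)
  have hiA : U.N.cof (coprod.inl ≫ i) := by
    simp only [U.cof_eq] at hicof ⊢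
    intro W Z ψ hψ
    haveI := hinl ψ hψ
    haveI := hicof ψ hψ
    infer_instance
  have hiB : U.N.cof (coprod.inr ≫ i) := by
    simp only [U.cof_eq] at hicof ⊢
    intro W Z ψ hψ
    haveI := hinr ψ hψ
    haveI := hicof ψ hψ
    infer_instance
  have hfacA : (coprod.inl ≫ i) ≫ p = θ := by
    rw [Category.assoc, fac, hφ, coprod.inl_desc]
  have hfacB : (coprod.inr ≫ i) ≫ p = 𝟙 B := by
    rw [Category.assoc, fac, hφ, coprod.inr_desc]
  have hθweq : U.N.weq θ := by rw [U.weq_eq]; exact hθ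
  have hAweq : U.N.weq (coprod.inl ≫ i) :=
    U.N.weq_cancel_right _ p hpmem.1 (by rw [hfacA]; exact hθweq)
  have hBweq : U.N.weq (coprod.inr ≫ i) :=
    U.N.weq_cancel_right _ p hpmem.1 (by rw [hfacB]; exact aux_weq_id U.N B)
  have liftA : ∀ ⦃W Z : C ⥤ S⦄ (ψ : W ⟶ Z), objProp P.fib D ψ →
      HasLiftingProperty (coprod.inl ≫ i) ψ := fun W Z ψ hψ =>
    U.N.fib_lift _ ψ hAweq hiA (by rw [U.fib_eq]; exact hψ)
  have liftB : ∀ ⦃W Z : C ⥤ S⦄ (ψ : W ⟶ Z), objProp P.fib D ψ →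
      HasLiftingProperty (coprod.inr ≫ i) ψ := fun W Z ψ hψ =>
    U.N.fib_lift _ ψ hBweq hiB (by rw [U.fib_eq]; exact hψ)
  have wA : P.weq ((coprod.inl ≫ i).app c) := aux_app_llp P hcg _ liftA c
  have wB : P.weq ((coprod.inr ≫ i).app c) := aux_app_llp P hcg _ liftB c
  have wp : P.weq (p.app c) := by
    apply P.weq_cancel_left ((coprod.inr ≫ i).app c) (p.app c) wB
    have e : (coprod.inr ≫ i).app c ≫ p.app c = 𝟙 (B.obj c) := by
      rw [← NatTrans.comp_app, hfacB]; rfl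
    rw [e]
    exact aux_weq_id P _
  have e : θ.app c = (coprod.inl ≫ i).app c ≫ p.app c := by
    rw [← NatTrans.comp_app, hfacA]
  rw [e]
  exact P.weq_comp _ _ wA wp

lemma aux_qcof [HasLimits S] [HasColimits S] (P : ModelStructure S)
    {C : Type v} [SmallCategory C] {D : Set C} (U : RelStructure P C D) (X : C ⥤ S) :
    dCofibrant P D (cofRep U.N X) := by
  have h := U.N.fact₁.mem_left (Arrow.mk (initial.to X))
  simp only [U.cof_eq] at h
  have e : initial.to (cofRep U.N X) = U.N.fact₁.ι.app (Arrow.mk (initial.to X)) :=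
    initial.hom_ext _ _
  show dCof P D (initial.to (cofRep U.N X))
  rw [e]
  exact h

lemma aux_qtf [HasLimits S] [HasColimits S] (P : ModelStructure S)
    {C : Type v} [SmallCategory C] {D : Set C} (U : RelStructure P C D) (X : C ⥤ S) :
    dTrivFib P D (cofRepHom U.N X) := by
  have h := U.N.fact₁.mem_right (Arrow.mk (initial.to X))
  exact ⟨by rw [← U.weq_eq]; exact h.1, by rw [← U.fib_eq]; exact h.2⟩

lemma aux_compare [HasLimits S] [HasColimits S] (P : ModelStructure S)
    {I J : MorphismProperty S} (hcg : IsCofGen P I J)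
    {C : Type v} [SmallCategory C] {D : Set C} (U : RelStructure P C D)
    (X : C ⥤ S) (c : C) {X' : C ⥤ S} (η : X' ⟶ X) (hX' : dCofibrant P D X')
    (hη : objProp P.weq D η) :
    P.weq (η.app c) ↔ P.weq ((cofRepHom U.N X).app c) := by
  have qtf := aux_qtf P U X
  haveI : HasLiftingProperty (initial.to X') (cofRepHom U.N X) := hX' _ qtf
  have sq : CommSq (initial.to (cofRep U.N X)) (initial.to X') (cofRepHom U.N X) η :=
    ⟨initial.hom_ext _ _⟩
  have facθ : sq.lift ≫ cofRepHom U.N X = η := sq.fac_right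
  have hθweq : objProp P.weq D sq.lift := by
    intro d hd
    apply P.weq_cancel_right _ ((cofRepHom U.N X).app d) (qtf.1 d hd)
    have e : sq.lift.app d ≫ (cofRepHom U.N X).app d = η.app d := by
      rw [← NatTrans.comp_app, facθ]
    rw [e]
    exact hη d hd
  have hθc : P.weq (sq.lift.app c) :=
    aux_key P hcg U sq.lift hX' (aux_qcof P U X) hθweq c
  have happ : sq.lift.app c ≫ (cofRepHom U.N X).app c = η.app c := by
    rw [← NatTrans.comp_app, facθ]
  constructor
  · intro h
    exact P.weq_cancel_left _ _ hθc (by rw [happ]; exact h)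
  · intro h
    rw [← happ]
    exact P.weq_comp _ _ hθc h

end AuxProofs

/-- local flexibility of codescent (Balmer–Matthey, Prop. 5.5). -/
theorem statement_7 {S : Type u} [Category.{v} S] [HasLimits S] [HasColimits S]
    (P : ModelStructure S) (I J : MorphismProperty S) (hcg : IsCofGen P I J)
    {C : Type v} [SmallCategory C] (D : Set C) (U : RelStructure P C D)
    (X : C ⥤ S) (c : C) :
    (CodescentAt P U X c ↔
      ∃ (X' : C ⥤ S) (η : X' ⟶ X), dCofibrant P D X' ∧ dTrivFib P D η ∧
        P.weq (η.app c)) ∧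
    (CodescentAt P U X c ↔
      ∀ (X' : C ⥤ S) (η : X' ⟶ X), dCofibrant P D X' → dTrivFib P D η →
        P.weq (η.app c)) ∧
    (CodescentAt P U X c ↔
      ∃ (X' : C ⥤ S) (η : X' ⟶ X), dCofibrant P D X' ∧
        objProp P.weq (insert c D) η) ∧
    (CodescentAt P U X c ↔
      ∀ (X' : C ⥤ S) (η : X' ⟶ X), dCofibrant P D X' → objProp P.weq D η →
        P.weq (η.app c)) := by
  have qcof := aux_qcof P U X
  have qtf := aux_qtf P U X
  refine ⟨⟨fun h => ⟨_, _, qcof, qtf, h⟩, ?_⟩,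
    ⟨fun h X' η hc htf => (aux_compare P hcg U X c η hc htf.1).mpr h,
      fun h => h _ _ qcof qtf⟩, ⟨?_, ?_⟩,
    ⟨fun h X' η hc hw => (aux_compare P hcg U X c η hc hw).mpr h,
      fun h => h _ _ qcof qtf.1⟩⟩
  · rintro ⟨X', η, hc, htf, hw⟩
    exact (aux_compare P hcg U X c η hc htf.1).mp hw
  · intro h
    refine ⟨cofRep U.N X, cofRepHom U.N X, qcof, ?_⟩
    intro d hd
    rw [Set.mem_insert_iff] at hd
    rcases hd with rfl | hd
    · exact h
    · exact qtf.1 d hd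
  · rintro ⟨X', η, hc, hw⟩
    exact (aux_compare P hcg U X c η hc
      (fun d hd => hw d (Set.mem_insert_of_mem c hd))).mp (hw c (Set.mem_insert c D))
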